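/- arXiv:2008.10446 — 6 statements merged into one kernel-verified Lean document; each statement's English description precedes it below -/
import Mathlib

section
/- Let f be a nonnegative integrable function on ℝ and S(z) = ∫ f(t)/(t - z) dt its Stieltjes transform on the upper half-plane. If f is continuous at a point x₀, then (1/π)·Im S(x₀ + iy) converges to f(x₀) as y → 0+. -/
open MeasureTheory Filter

theorem stieltjes_im_tendsto_of_continuousAt
    (f : ℝ → ℝ) (hf_nonneg : ∀ t, 0 ≤ f t) (hf_int : Integrable f)
    (x₀ : ℝ) (hf_cont : ContinuousAt f x₀) :
    Tendsto (fun y : ℝ =>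
        (1 / Real.pi) *
          (∫ t : ℝ, (f t : ℂ) / ((t : ℂ) - ((x₀ : ℂ) + (y : ℂ) * Complex.I))).im)
      (nhdsWithin 0 (Set.Ioi 0)) (nhds (f x₀)) := by
  set φ : ℝ → ℝ := fun u => (Real.pi * (1 + u ^ 2))⁻¹ with hφ_def
  have hπ : (0:ℝ) < Real.pi := Real.pi_pos
  have hφ_nonneg : ∀ u, 0 ≤ φ u := fun u => by positivity
  have hφ_int : ∫ u, φ u = 1 := by
    simp only [hφ_def, mul_inv]
    rw [integral_const_mul, integral_univ_inv_one_add_sq, inv_mul_cancel₀ hπ.ne']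
  have hφ_decay : Tendsto (fun x : ℝ => ‖x‖ ^ Module.finrank ℝ ℝ * φ x)
      (Bornology.cobounded ℝ) (nhds 0) := by
    have h1 : Tendsto (fun r : ℝ => r ^ Module.finrank ℝ ℝ * (Real.pi * (1 + r ^ 2))⁻¹)
        atTop (nhds 0) := by
      apply tendsto_of_tendsto_of_tendsto_of_le_of_le' (g := fun _ : ℝ => (0:ℝ))
        (h := fun r : ℝ => Real.pi⁻¹ * r⁻¹) tendsto_const_nhds
      · simpa using tendsto_inv_atTop_zero.const_mul (Real.pi)⁻¹
      · filter_upwards [eventually_ge_atTop 1] with r hr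
        positivity
      · filter_upwards [eventually_ge_atTop 1] with r hr
        have hr0 : (0:ℝ) < r := lt_of_lt_of_le one_pos hr
        rw [Module.finrank_self, pow_one, mul_inv, ← mul_assoc, mul_comm r,
          mul_assoc]
        gcongr
        rw [inv_eq_one_div, inv_eq_one_div, ← div_eq_mul_one_div,
          div_le_div_iff₀ (by positivity) hr0]
        nlinarith
    have := h1.comp (tendsto_norm_cobounded_atTop (E := ℝ))
    simpa [Function.comp_def, hφ_def, Real.norm_eq_abs, sq_abs] using this
  have H := tendsto_integral_comp_smul_smul_of_integrable' (μ := volume)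
    hφ_nonneg hφ_int hφ_decay hf_int hf_cont
  have H2 := H.comp tendsto_inv_nhdsGT_zero
  apply H2.congr'
  filter_upwards [self_mem_nhdsWithin] with y (hy : 0 < y)
  have hy0 : y ≠ 0 := hy.ne'
  set z : ℂ := (x₀ : ℂ) + (y : ℂ) * Complex.I with hz
  have hint : Integrable (fun t : ℝ => (f t : ℂ) / ((t : ℂ) - z)) := by
    apply Integrable.mono' (g := fun t => f t * y⁻¹)
      (hf_int.mul_const y⁻¹)
    · exact ((Complex.measurable_ofReal.comp_aemeasurable hf_int.aemeasurable).div
        ((Complex.measurable_ofReal.sub measurable_const).aemeasurable)).aestronglyMeasurable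
    · filter_upwards with t
      rw [norm_div]
      have him : y ≤ ‖(t:ℂ) - z‖ := by
        have : |((t:ℂ) - z).im| ≤ ‖(t:ℂ) - z‖ := Complex.abs_im_le_norm _
        simpa [hz, abs_of_pos hy] using this
      have h1 : ‖(f t : ℂ)‖ = f t := by
        simp [Complex.norm_real, abs_of_nonneg (hf_nonneg t)]
      rw [h1, ← div_eq_mul_inv]
      gcongr
      exact hf_nonneg t
  rw [Function.comp]
  have him2 : (∫ t : ℝ, (f t : ℂ) / ((t : ℂ) - z)).im
      = ∫ t : ℝ, ((f t : ℂ) / ((t : ℂ) - z)).im := (integral_im hint).symm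
  rw [him2, ← integral_const_mul]
  apply integral_congr_ae
  filter_upwards with t
  have hden : (t - x₀) ^ 2 + y ^ 2 ≠ 0 := by positivity
  have hre : ((t:ℂ) - z).re = t - x₀ := by simp [hz]
  have himz : ((t:ℂ) - z).im = -y := by simp [hz]
  have hns : Complex.normSq ((t:ℂ) - z) = (t - x₀) ^ 2 + y ^ 2 := by
    rw [Complex.normSq_apply, hre, himz]; ring
  have him : ((f t : ℂ) / ((t : ℂ) - z)).im = f t * (y / ((t - x₀) ^ 2 + y ^ 2)) := by
    rw [Complex.div_im, hre, himz, hns]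
    simp only [Complex.ofReal_im, Complex.ofReal_re]
    ring
  rw [him]
  simp only [Module.finrank_self, pow_one, smul_eq_mul, hφ_def]
  field_simp
  ring
end

section
/- Let ν be a finite positive Borel measure on ℝ with Stieltjes transform s(z) = ∫ dν(t)/(t - z). If lim_{y→0+} Im s(x + iy) = 0 for every x ∈ ℝ, then ν is the zero measure. -/
open MeasureTheory Filter
open scoped ENNReal NNReal

lemma stieltjes_integrable (ν : Measure ℝ) [IsFiniteMeasure ν] (x y : ℝ) (hy : 0 < y) :
    Integrable (fun t : ℝ => ((t : ℂ) - ((x : ℂ) + (y : ℂ) * Complex.I))⁻¹) ν := by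
  set z : ℂ := (x : ℂ) + (y : ℂ) * Complex.I with hz
  have hzim : z.im = y := by simp [hz]
  have hne : ∀ t : ℝ, (t : ℂ) - z ≠ 0 := by
    intro t ht
    have : ((t : ℂ) - z).im = 0 := by rw [ht]; simp
    simp [Complex.sub_im, hzim] at this
    exact hy.ne' this
  refine Integrable.mono' (integrable_const (1 / y)) ?_ ?_
  · exact ((Complex.continuous_ofReal.sub continuous_const).inv₀ hne).aestronglyMeasurable
  · filter_upwards with t
    rw [norm_inv]
    rw [div_eq_inv_mul, mul_one]
    apply inv_anti₀ hy
    calc y = |((t : ℂ) - z).im| := by simp [Complex.sub_im, hzim, abs_of_pos hy]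
    _ ≤ ‖(t : ℂ) - z‖ := Complex.abs_im_le_norm _
    _ = ‖(t : ℂ) - z‖ := rfl

lemma stieltjes_im_key (ν : Measure ℝ) [IsFiniteMeasure ν] (x y : ℝ) (hy : 0 < y) :
    (ν (Metric.closedBall x y)).toReal ≤
      2 * y * (∫ t : ℝ, ((t : ℂ) - ((x : ℂ) + (y : ℂ) * Complex.I))⁻¹ ∂ν).im := by
  set z : ℂ := (x : ℂ) + (y : ℂ) * Complex.I with hz
  have hint := stieltjes_integrable ν x y hy
  have him : ∀ t : ℝ, (((t : ℂ) - z)⁻¹).im = y / ((t - x) ^ 2 + y ^ 2) := by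
    intro t
    rw [Complex.inv_im]
    have h1 : ((t : ℂ) - z).im = -y := by simp [hz]
    have h2 : Complex.normSq ((t : ℂ) - z) = (t - x) ^ 2 + y ^ 2 := by
      rw [Complex.normSq_apply, h1]
      simp [hz]
      ring
    rw [h1, h2]
    ring
  have hpos : ∀ t : ℝ, 0 ≤ (((t : ℂ) - z)⁻¹).im := by
    intro t
    rw [him t]
    positivity
  have hmain : (∫ t : ℝ, ((t : ℂ) - z)⁻¹ ∂ν).im = ∫ t : ℝ, (((t : ℂ) - z)⁻¹).im ∂ν := by
    rw [← RCLike.im_to_complex, ← integral_im hint]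
    simp only [RCLike.im_to_complex]
    rfl
  rw [hmain]
  have hB : ∫ t in Metric.closedBall x y, (((t : ℂ) - z)⁻¹).im ∂ν ≤
      ∫ t : ℝ, (((t : ℂ) - z)⁻¹).im ∂ν :=
    setIntegral_le_integral hint.im (Filter.Eventually.of_forall hpos)
  have hconst : (1 / (2 * y)) * (ν (Metric.closedBall x y)).toReal ≤
      ∫ t in Metric.closedBall x y, (((t : ℂ) - z)⁻¹).im ∂ν := by
    apply setIntegral_ge_of_const_le_real measurableSet_closedBall (measure_ne_top ν _)
    · intro t ht
      rw [him t]
      rw [Metric.mem_closedBall, Real.dist_eq, abs_le] at ht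
      rw [div_le_div_iff₀ (by positivity) (by positivity)]
      nlinarith [ht.1, ht.2]
    · exact hint.im.integrableOn
  have h2y : (0:ℝ) < 2 * y := by linarith
  have := hconst.trans hB
  rw [div_mul_eq_mul_div, one_mul, div_le_iff₀ h2y] at this
  linarith

lemma aux_zero {a C : ℝ≥0∞} (hC : C ≠ ⊤) (h : ∀ ε : ℝ≥0, 0 < ε → a ≤ ε * C) : a = 0 := by
  refine le_antisymm ?_ zero_le
  refine ENNReal.le_of_forall_pos_le_add fun ε hε _ => ?_
  rw [zero_add]
  set δ : ℝ≥0 := ε / (C.toNNReal + 1) with hδdef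
  have hδ : 0 < δ := by
    positivity
  calc a ≤ δ * C := h δ hδ
    _ ≤ δ * ((C.toNNReal + 1 : ℝ≥0) : ℝ≥0∞) := by
        apply mul_le_mul_right
        rw [← ENNReal.coe_toNNReal hC]
        exact_mod_cast le_self_add
    _ = ((δ * (C.toNNReal + 1) : ℝ≥0) : ℝ≥0∞) := by push_cast; ring
    _ = (ε : ℝ≥0∞) := by
        rw [hδdef, div_mul_cancel₀]
        exact (add_pos_of_nonneg_of_pos zero_le one_pos).ne'

theorem measure_eq_zero_of_stieltjes_im_tendsto_zero
    (ν : Measure ℝ) [IsFiniteMeasure ν]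
    (h : ∀ x : ℝ,
      Tendsto (fun y : ℝ =>
          (∫ t : ℝ, ((t : ℂ) - ((x : ℂ) + (y : ℂ) * Complex.I))⁻¹ ∂ν).im)
        (nhdsWithin 0 (Set.Ioi 0)) (nhds 0)) :
    ν = 0 := by
  set v := Besicovitch.vitaliFamily ν with hv
  have key : ∀ n : ℕ, ν (Metric.closedBall (0:ℝ) n) = 0 := by
    intro n
    apply aux_zero (C := volume (Metric.closedBall (0:ℝ) n)) (measure_closedBall_lt_top.ne)
    intro ε hε
    have hle : ν (Metric.closedBall (0:ℝ) n) ≤ ((ε • volume : Measure ℝ)) (Metric.closedBall (0:ℝ) n) := by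
      apply v.measure_le_of_frequently_le (ε • volume) Measure.AbsolutelyContinuous.rfl
      intro x _
      have hev : ∀ᶠ r : ℝ in nhdsWithin 0 (Set.Ioi 0),
          (∫ t : ℝ, ((t : ℂ) - ((x : ℂ) + (r : ℂ) * Complex.I))⁻¹ ∂ν).im < ε := by
        exact (h x).eventually_lt_const (by exact_mod_cast hε)
      have hpos : ∀ᶠ r : ℝ in nhdsWithin 0 (Set.Ioi 0), r ∈ Set.Ioi (0:ℝ) :=
        eventually_mem_nhdsWithin
      refine (Besicovitch.tendsto_filterAt ν x).frequently (Eventually.frequently ?_)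
      filter_upwards [hev, hpos] with r him hrpos
      have hrpos' : (0:ℝ) < r := hrpos
      have h1 := stieltjes_im_key ν x r hrpos'
      have h2 : ν (Metric.closedBall x r) = ENNReal.ofReal ((ν (Metric.closedBall x r)).toReal) :=
        (ENNReal.ofReal_toReal (measure_ne_top ν _)).symm
      rw [h2]
      calc ENNReal.ofReal ((ν (Metric.closedBall x r)).toReal)
          ≤ ENNReal.ofReal (2 * r * (∫ t : ℝ, ((t : ℂ) - ((x : ℂ) + (r : ℂ) * Complex.I))⁻¹ ∂ν).im) :=
            ENNReal.ofReal_le_ofReal h1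
        _ ≤ ENNReal.ofReal ((ε : ℝ) * (2 * r)) := by
            apply ENNReal.ofReal_le_ofReal
            nlinarith [him, hrpos']
        _ = (ε : ℝ≥0∞) * ENNReal.ofReal (2 * r) := by
            rw [ENNReal.ofReal_mul ε.coe_nonneg, ENNReal.ofReal_coe_nnreal]
        _ = (ε • volume : Measure ℝ) (Metric.closedBall x r) := by
            rw [Measure.smul_apply, Real.volume_closedBall, ENNReal.smul_def, smul_eq_mul]
    rw [Measure.smul_apply, ENNReal.smul_def, smul_eq_mul] at hle
    exact hle
  have huniv : ν Set.univ = 0 := by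
    have hU : Set.univ = ⋃ n : ℕ, Metric.closedBall (0:ℝ) n := by
      ext x
      simp only [Set.mem_univ, Set.mem_iUnion, Metric.mem_closedBall, true_iff]
      obtain ⟨n, hn⟩ := exists_nat_ge (dist x 0)
      exact ⟨n, hn⟩
    rw [hU]
    refine le_antisymm ((measure_iUnion_le _).trans ?_) zero_le
    simp [key]
  exact Measure.measure_univ_eq_zero.mp huniv
end

section
/- Let n ≥ 2, A an n×n real symmetric matrix, z ∈ ℂ⁺, and R = (A - zI)⁻¹. Then for each index i, R_{ii} = -(z - A_{ii} + X⁽ⁱ⁾ᵀ R⁽ⁱ⁾ X⁽ⁱ⁾)⁻¹, where X⁽ⁱ⁾ is the i-th column of A with entry i removed and R⁽ⁱ⁾ is the resolvent of the (n-1)×(n-1) matrix A⁽ⁱ⁾ obtained from A by deleting the i-th row and column. -/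
open Matrix

lemma herm_sub_smul_det_isUnit {m : Type*} [Fintype m] [DecidableEq m]
    (H : Matrix m m ℂ) (hH : H.IsHermitian) (z : ℂ) (hz : z.im ≠ 0) :
    IsUnit (H - z • (1 : Matrix m m ℂ)).det := by
  rw [isUnit_iff_ne_zero]
  intro hdet
  obtain ⟨v, hv, hMv⟩ := (Matrix.exists_mulVec_eq_zero_iff).2 hdet
  have h0 : star v ⬝ᵥ ((H - z • (1 : Matrix m m ℂ)).mulVec v) = 0 := by
    rw [hMv, dotProduct_zero]
  rw [sub_mulVec, smul_mulVec, one_mulVec, dotProduct_sub, dotProduct_smul,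
    sub_eq_zero] at h0
  set c := star v ⬝ᵥ H.mulVec v with hc
  have hcim : c.im = 0 := by
    have : (starRingEnd ℂ) c = c := by
      rw [hc]
      conv_lhs => rw [← Complex.star_def, ← star_dotProduct_star, star_star, star_mulVec,
        hH.eq, ← dotProduct_mulVec]
    exact Complex.conj_eq_iff_im.mp this
  have hr : star v ⬝ᵥ v = ((∑ j, Complex.normSq (v j) : ℝ) : ℂ) := by
    push_cast
    simp [dotProduct, Complex.star_def, Complex.normSq_eq_conj_mul_self]
  have him := congrArg Complex.im h0
  rw [hr] at him
  simp [hcim, Complex.ofReal_im] at him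
  rcases him with h | h
  · exact hz h
  · apply hv
    ext j
    have := (Finset.sum_eq_zero_iff_of_nonneg
      (fun j _ => Complex.normSq_nonneg (v j))).mp h j (Finset.mem_univ j)
    simpa using Complex.normSq_eq_zero.mp this

theorem resolvent_complement_formula
    (n : ℕ) (hn : 2 ≤ n) (A : Matrix (Fin n) (Fin n) ℝ) (hA : A.IsSymm)
    (z : ℂ) (hz : 0 < z.im) (i : Fin n) :
    ((A.map (fun a : ℝ => (a : ℂ)) - z • (1 : Matrix (Fin n) (Fin n) ℂ))⁻¹) i i =
      -(z - (A i i : ℂ) +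
          (fun j : {j : Fin n // j ≠ i} => (A j.1 i : ℂ)) ⬝ᵥ
            ((Matrix.of (fun j k : {j : Fin n // j ≠ i} => (A j.1 k.1 : ℂ)) -
                z • (1 : Matrix {j : Fin n // j ≠ i} {j : Fin n // j ≠ i} ℂ))⁻¹).mulVec
              (fun j : {j : Fin n // j ≠ i} => (A j.1 i : ℂ)))⁻¹ := by
  have hz' : z.im ≠ 0 := ne_of_gt hz
  set X : {j : Fin n // j ≠ i} → ℂ := fun j : {j : Fin n // j ≠ i} => (A j.1 i : ℂ) with hX
  set B : Matrix {j : Fin n // j ≠ i} {j : Fin n // j ≠ i} ℂ :=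
    Matrix.of (fun j k : {j : Fin n // j ≠ i} => (A j.1 k.1 : ℂ)) -
      z • (1 : Matrix {j : Fin n // j ≠ i} {j : Fin n // j ≠ i} ℂ) with hB
  set M : Matrix (Fin n) (Fin n) ℂ :=
    A.map (fun a : ℝ => (a : ℂ)) - z • (1 : Matrix (Fin n) (Fin n) ℂ) with hM
  have hMH : (A.map (fun a : ℝ => (a : ℂ))).IsHermitian := by
    ext j k
    simp only [conjTranspose_apply, map_apply, Complex.star_def, Complex.conj_ofReal]
    exact_mod_cast congrArg Complex.ofReal (hA.apply j k)
  have hBH : (Matrix.of (fun j k : {j : Fin n // j ≠ i} => (A j.1 k.1 : ℂ))).IsHermitian := by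
    ext j k
    simp only [conjTranspose_apply, of_apply, Complex.star_def, Complex.conj_ofReal]
    exact_mod_cast congrArg Complex.ofReal (hA.apply j.1 k.1)
  have hMdet : IsUnit M.det := herm_sub_smul_det_isUnit _ hMH z hz'
  have hBdet : IsUnit B.det := herm_sub_smul_det_isUnit _ hBH z hz'
  set w : {j : Fin n // j ≠ i} → ℂ := B⁻¹.mulVec X with hw
  have hBw : B.mulVec w = X := by
    rw [hw, mulVec_mulVec, mul_nonsing_inv _ hBdet, one_mulVec]
  set s : ℂ := (A i i : ℂ) - z - X ⬝ᵥ w with hs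
  set u : Fin n → ℂ := fun k => if h : k = i then 1 else -(w ⟨k, h⟩) with hu
  have hsum : ∀ f : Fin n → ℂ, ∑ l, f l = f i + ∑ l : {j : Fin n // j ≠ i}, f l.1 := by
    intro f
    rw [Fintype.sum_eq_add_sum_compl i f]
    congr 1
    exact Finset.sum_subtype _ (by simp) _
  have key : M.mulVec u = fun k => if k = i then s else 0 := by
    funext k
    show ∑ l, M k l * u l = _
    rw [hsum]
    rcases eq_or_ne k i with rfl | hk
    · rw [if_pos rfl]
      have h1 : M k k * u k = (A k k : ℂ) - z := by
        simp [hM, hu, Matrix.sub_apply, map_apply, Matrix.smul_apply, one_apply]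
      have h2 : ∀ l : {j : Fin n // j ≠ k}, M k l.1 * u l.1 = -(X l * w l) := by
        intro l
        have hkl : k ≠ l.1 := fun h => l.2 h.symm
        have hul : u l.1 = -(w l) := by
          simp [hu, l.2]
        rw [hul, hM]
        simp only [Matrix.sub_apply, map_apply, Matrix.smul_apply, one_apply, if_neg hkl, smul_eq_mul,
          mul_zero, sub_zero]
        rw [hX]
        have hsymm : A k l.1 = A l.1 k := (hA.apply k l.1).symm
        rw [hsymm]
        ring
      rw [h1, Finset.sum_congr rfl (fun l _ => h2 l), Finset.sum_neg_distrib]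
      rw [hs, dotProduct]
      ring
    · rw [if_neg hk]
      have h1 : M k i * u i = (A k i : ℂ) := by
        simp [hM, hu, Matrix.sub_apply, map_apply, Matrix.smul_apply, one_apply, hk]
      have h2 : ∀ l : {j : Fin n // j ≠ i}, M k l.1 * u l.1 = -(B ⟨k, hk⟩ l * w l) := by
        intro l
        have hul : u l.1 = -(w l) := by
          simp [hu, l.2]
        rw [hul, hM, hB]
        simp only [Matrix.sub_apply, map_apply, Matrix.smul_apply, one_apply, of_apply, smul_eq_mul]
        have : (⟨k, hk⟩ : {j : Fin n // j ≠ i}) = l ↔ k = l.1 := Subtype.ext_iff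
        by_cases hkl : k = l.1
        · rw [if_pos hkl, if_pos (this.mpr hkl)]; ring
        · rw [if_neg hkl, if_neg (fun h => hkl (this.mp h))]; ring
      rw [h1, Finset.sum_congr rfl (fun l _ => h2 l), Finset.sum_neg_distrib]
      have h3 : ∑ l : {j : Fin n // j ≠ i}, B ⟨k, hk⟩ l * w l = X ⟨k, hk⟩ := by
        have := congrFun hBw ⟨k, hk⟩
        simpa [mulVec, dotProduct] using this
      rw [h3, hX]
      ring
  have hident : (fun k => if k = i then s else 0) = s • ((Pi.single i 1 : Fin n → ℂ)) := by
    funext k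
    by_cases h : k = i <;> simp [h, Pi.single_apply]
  have hu_eq : u = s • (M⁻¹.mulVec ((Pi.single i 1 : Fin n → ℂ))) := by
    conv_lhs => rw [← one_mulVec u, ← nonsing_inv_mul M hMdet, ← mulVec_mulVec, key,
      hident]
    rw [mulVec_smul]
  have hmain := congrFun hu_eq i
  rw [hu] at hmain
  simp only [dite_true, dif_pos rfl, Pi.smul_apply, smul_eq_mul,
    mulVec_single, mul_one, MulOpposite.op_one, one_smul, Matrix.col_apply] at hmain
  have hgoal : -(z - (A i i : ℂ) + X ⬝ᵥ w) = s := by rw [hs]; ring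
  rw [← inv_neg, hgoal]
  refine eq_inv_of_mul_eq_one_left ?_
  rw [mul_comm]
  exact hmain.symm
end

section
/- For c ∈ (0,1), define α_c = (8 + 4c - 13c² - √(c(8-7c)³))/(8(1-c)) and β_c = (8 + 4c - 13c² + √(c(8-7c)³))/(8(1-c)). Then the map c ↦ β_c is strictly increasing on (0,1) and the map c ↦ α_c is strictly decreasing on (0,1). -/
noncomputable def alphaC (c : ℝ) : ℝ :=
  (8 + 4 * c - 13 * c ^ 2 - Real.sqrt (c * (8 - 7 * c) ^ 3)) / (8 * (1 - c))

noncomputable def betaC (c : ℝ) : ℝ :=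
  (8 + 4 * c - 13 * c ^ 2 + Real.sqrt (c * (8 - 7 * c) ^ 3)) / (8 * (1 - c))

lemma hasDerivAt_pair {c : ℝ} (hc0 : 0 < c) (hc1 : c < 1) :
    HasDerivAt betaC
      ((Real.sqrt (c * (8 - 7 * c) ^ 3) * (13 * c ^ 2 - 26 * c + 12)
        + (8 - 7 * c) ^ 2 * (7 * c ^ 2 - 10 * c + 4)) /
       (8 * Real.sqrt (c * (8 - 7 * c) ^ 3) * (1 - c) ^ 2)) c ∧
    HasDerivAt alphaC
      ((Real.sqrt (c * (8 - 7 * c) ^ 3) * (13 * c ^ 2 - 26 * c + 12)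
        - (8 - 7 * c) ^ 2 * (7 * c ^ 2 - 10 * c + 4)) /
       (8 * Real.sqrt (c * (8 - 7 * c) ^ 3) * (1 - c) ^ 2)) c := by
  have h83 : (0:ℝ) < 8 - 7 * c := by linarith
  have hf : 0 < c * (8 - 7 * c) ^ 3 := mul_pos hc0 (pow_pos h83 3)
  set s := Real.sqrt (c * (8 - 7 * c) ^ 3) with hs_def
  have hs : 0 < s := Real.sqrt_pos.mpr hf
  have hs2 : s ^ 2 = c * (8 - 7 * c) ^ 3 := Real.sq_sqrt hf.le
  have h1c : (0:ℝ) < 1 - c := by linarith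
  have hD : (8 : ℝ) * (1 - c) ≠ 0 := by positivity
  have h7 : HasDerivAt (fun x : ℝ => 8 - 7 * x) (-7) c := by
    exact ((hasDerivAt_const c (8:ℝ)).sub ((hasDerivAt_id c).const_mul 7)).congr_deriv (by ring)
  have hin : HasDerivAt (fun x : ℝ => x * (8 - 7 * x) ^ 3)
      (1 * (8 - 7 * c) ^ 3 + c * ((3:ℕ) * (8 - 7 * c) ^ 2 * (-7))) c := by
    have := (hasDerivAt_id c).mul (h7.pow 3)
    exact this
  have hsq : HasDerivAt (fun x : ℝ => Real.sqrt (x * (8 - 7 * x) ^ 3))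
      ((1 * (8 - 7 * c) ^ 3 + c * ((3:ℕ) * (8 - 7 * c) ^ 2 * (-7))) / (2 * s)) c :=
    hin.sqrt (ne_of_gt hf)
  have hN : HasDerivAt (fun x : ℝ => 8 + 4 * x - 13 * x ^ 2) (4 - 26 * c) c := by
    have := (((hasDerivAt_id c).const_mul 4).const_add 8).sub
      (((hasDerivAt_id c).pow 2).const_mul 13)
    refine this.congr_deriv (Eq.symm ?_)
    simp only [id_eq]
    push_cast
    ring
  have hDen : HasDerivAt (fun x : ℝ => 8 * (1 - x)) (8 * (-1)) c :=
    ((hasDerivAt_id c).const_sub 1).const_mul 8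
  constructor
  · have hdiv := (hN.add hsq).div hDen hD
    refine hdiv.congr_deriv (Eq.symm ?_)
    simp only [Pi.add_apply, ← hs_def]
    have hsne : s ≠ 0 := hs.ne'
    have h1cne : (1:ℝ) - c ≠ 0 := h1c.ne'
    field_simp
    linear_combination (-2) * hs2
  · have hdiv := (hN.sub hsq).div hDen hD
    refine hdiv.congr_deriv (Eq.symm ?_)
    simp only [Pi.sub_apply, ← hs_def]
    have hsne : s ≠ 0 := hs.ne'
    have h1cne : (1:ℝ) - c ≠ 0 := h1c.ne'
    field_simp
    linear_combination 2 * hs2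

lemma sq_lt_helper {u K : ℝ} (h1 : u ^ 2 < K ^ 2) (h2 : 0 < K) : -K < u ∧ u < K := by
  constructor <;> nlinarith

lemma key_pos {c : ℝ} (hc0 : 0 < c) (hc1 : c < 1) :
    0 < Real.sqrt (c * (8 - 7 * c) ^ 3) * (13 * c ^ 2 - 26 * c + 12)
        + (8 - 7 * c) ^ 2 * (7 * c ^ 2 - 10 * c + 4) := by
  have h83 : (0:ℝ) < 8 - 7 * c := by linarith
  have hf : 0 < c * (8 - 7 * c) ^ 3 := mul_pos hc0 (pow_pos h83 3)
  set s := Real.sqrt (c * (8 - 7 * c) ^ 3) with hs_def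
  have hs : 0 < s := Real.sqrt_pos.mpr hf
  have hs2 : s ^ 2 = c * (8 - 7 * c) ^ 3 := Real.sq_sqrt hf.le
  have hB : 0 < 7 * c ^ 2 - 10 * c + 4 := by nlinarith [sq_nonneg (7 * c - 5)]
  have hK : 0 < (8 - 7 * c) ^ 2 * (7 * c ^ 2 - 10 * c + 4) := by positivity
  rcases le_or_gt 0 (13 * c ^ 2 - 26 * c + 12) with hA | hA
  · have : 0 ≤ s * (13 * c ^ 2 - 26 * c + 12) := mul_nonneg hs.le hA
    linarith
  · have hc2 : c ≠ 1 / 2 := by intro h; rw [h] at hA; norm_num at hA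
    have h21 : 0 < (2 * c - 1) ^ 2 := by
      have hne : 2 * c - 1 ≠ 0 := by intro h; exact hc2 (by linarith)
      positivity
    have hstrict : c * (13 * c ^ 2 - 26 * c + 12) ^ 2
        < (8 - 7 * c) * (7 * c ^ 2 - 10 * c + 4) ^ 2 := by
      have hid : (8 - 7 * c) * (7 * c ^ 2 - 10 * c + 4) ^ 2
          - c * (13 * c ^ 2 - 26 * c + 12) ^ 2 = 128 * (1 - c) ^ 3 * (2 * c - 1) ^ 2 := by
        ring
      have hpos : 0 < 128 * (1 - c) ^ 3 * (2 * c - 1) ^ 2 :=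
        mul_pos (mul_pos (by norm_num) (pow_pos (show (0:ℝ) < 1 - c by linarith) 3)) h21
      linarith
    have hsq : (s * (13 * c ^ 2 - 26 * c + 12)) ^ 2
        < ((8 - 7 * c) ^ 2 * (7 * c ^ 2 - 10 * c + 4)) ^ 2 := by
      have he : (s * (13 * c ^ 2 - 26 * c + 12)) ^ 2
          = (8 - 7 * c) ^ 3 * (c * (13 * c ^ 2 - 26 * c + 12) ^ 2) := by
        rw [mul_pow, hs2]; ring
      rw [he]
      calc (8 - 7 * c) ^ 3 * (c * (13 * c ^ 2 - 26 * c + 12) ^ 2)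
          < (8 - 7 * c) ^ 3 * ((8 - 7 * c) * (7 * c ^ 2 - 10 * c + 4) ^ 2) :=
            mul_lt_mul_of_pos_left hstrict (pow_pos h83 3)
        _ = ((8 - 7 * c) ^ 2 * (7 * c ^ 2 - 10 * c + 4)) ^ 2 := by ring
    have := (sq_lt_helper hsq hK).1
    linarith

lemma key_neg {c : ℝ} (hc0 : 0 < c) (hc1 : c < 1) (hc2 : c ≠ 1 / 2) :
    Real.sqrt (c * (8 - 7 * c) ^ 3) * (13 * c ^ 2 - 26 * c + 12)
        - (8 - 7 * c) ^ 2 * (7 * c ^ 2 - 10 * c + 4) < 0 := by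
  have h83 : (0:ℝ) < 8 - 7 * c := by linarith
  have hf : 0 < c * (8 - 7 * c) ^ 3 := mul_pos hc0 (pow_pos h83 3)
  set s := Real.sqrt (c * (8 - 7 * c) ^ 3) with hs_def
  have hs : 0 < s := Real.sqrt_pos.mpr hf
  have hs2 : s ^ 2 = c * (8 - 7 * c) ^ 3 := Real.sq_sqrt hf.le
  have hB : 0 < 7 * c ^ 2 - 10 * c + 4 := by nlinarith [sq_nonneg (7 * c - 5)]
  have hK : 0 < (8 - 7 * c) ^ 2 * (7 * c ^ 2 - 10 * c + 4) := by positivity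
  rcases le_or_gt (13 * c ^ 2 - 26 * c + 12) 0 with hA | hA
  · have : s * (13 * c ^ 2 - 26 * c + 12) ≤ 0 := mul_nonpos_of_nonneg_of_nonpos hs.le hA
    linarith
  · have h21 : 0 < (2 * c - 1) ^ 2 := by
      have hne : 2 * c - 1 ≠ 0 := by intro h; exact hc2 (by linarith)
      positivity
    have hstrict : c * (13 * c ^ 2 - 26 * c + 12) ^ 2
        < (8 - 7 * c) * (7 * c ^ 2 - 10 * c + 4) ^ 2 := by
      have hid : (8 - 7 * c) * (7 * c ^ 2 - 10 * c + 4) ^ 2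
          - c * (13 * c ^ 2 - 26 * c + 12) ^ 2 = 128 * (1 - c) ^ 3 * (2 * c - 1) ^ 2 := by
        ring
      have hpos : 0 < 128 * (1 - c) ^ 3 * (2 * c - 1) ^ 2 :=
        mul_pos (mul_pos (by norm_num) (pow_pos (show (0:ℝ) < 1 - c by linarith) 3)) h21
      linarith
    have hsq : (s * (13 * c ^ 2 - 26 * c + 12)) ^ 2
        < ((8 - 7 * c) ^ 2 * (7 * c ^ 2 - 10 * c + 4)) ^ 2 := by
      have he : (s * (13 * c ^ 2 - 26 * c + 12)) ^ 2
          = (8 - 7 * c) ^ 3 * (c * (13 * c ^ 2 - 26 * c + 12) ^ 2) := by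
        rw [mul_pow, hs2]; ring
      rw [he]
      calc (8 - 7 * c) ^ 3 * (c * (13 * c ^ 2 - 26 * c + 12) ^ 2)
          < (8 - 7 * c) ^ 3 * ((8 - 7 * c) * (7 * c ^ 2 - 10 * c + 4) ^ 2) :=
            mul_lt_mul_of_pos_left hstrict (pow_pos h83 3)
        _ = ((8 - 7 * c) ^ 2 * (7 * c ^ 2 - 10 * c + 4)) ^ 2 := by ring
    have := (sq_lt_helper hsq hK).2
    linarith

theorem betaC_strictMono_alphaC_strictAnti :
    StrictMonoOn betaC (Set.Ioo (0 : ℝ) 1) ∧ StrictAntiOn alphaC (Set.Ioo (0 : ℝ) 1) := by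
  have denom_pos : ∀ x : ℝ, 0 < x → x < 1 →
      0 < 8 * Real.sqrt (x * (8 - 7 * x) ^ 3) * (1 - x) ^ 2 := by
    intro x hx0 hx1
    have h83 : (0:ℝ) < 8 - 7 * x := by linarith
    have hs : 0 < Real.sqrt (x * (8 - 7 * x) ^ 3) :=
      Real.sqrt_pos.mpr (mul_pos hx0 (pow_pos h83 3))
    have h1x : (0:ℝ) < 1 - x := by linarith
    positivity
  constructor
  · apply strictMonoOn_of_deriv_pos (convex_Ioo 0 1)
    · intro x hx
      exact ((hasDerivAt_pair hx.1 hx.2).1).continuousAt.continuousWithinAt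
    · intro x hx
      rw [interior_Ioo] at hx
      rw [((hasDerivAt_pair hx.1 hx.2).1).deriv]
      exact div_pos (key_pos hx.1 hx.2) (denom_pos x hx.1 hx.2)
  · have anti1 : StrictAntiOn alphaC (Set.Ioc 0 (1/2 : ℝ)) := by
      apply strictAntiOn_of_deriv_neg (convex_Ioc 0 (1/2))
      · intro x hx
        have hx1 : x < 1 := lt_of_le_of_lt hx.2 (by norm_num)
        exact ((hasDerivAt_pair hx.1 hx1).2).continuousAt.continuousWithinAt
      · intro x hx
        rw [interior_Ioc] at hx
        have hx1 : x < 1 := lt_trans hx.2 (by norm_num)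
        rw [((hasDerivAt_pair hx.1 hx1).2).deriv]
        exact div_neg_of_neg_of_pos (key_neg hx.1 hx1 (ne_of_lt hx.2)) (denom_pos x hx.1 hx1)
    have anti2 : StrictAntiOn alphaC (Set.Ico (1/2 : ℝ) 1) := by
      apply strictAntiOn_of_deriv_neg (convex_Ico (1/2) 1)
      · intro x hx
        have hx0 : (0:ℝ) < x := lt_of_lt_of_le (by norm_num) hx.1
        exact ((hasDerivAt_pair hx0 hx.2).2).continuousAt.continuousWithinAt
      · intro x hx
        rw [interior_Ico] at hx
        have hx0 : (0:ℝ) < x := lt_trans (by norm_num) hx.1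
        rw [((hasDerivAt_pair hx0 hx.2).2).deriv]
        exact div_neg_of_neg_of_pos (key_neg hx0 hx.2 (ne_of_gt hx.1)) (denom_pos x hx0 hx.2)
    intro a ha b hb hab
    rcases le_total b (1/2 : ℝ) with h | h
    · exact anti1 ⟨ha.1, le_of_lt (lt_of_lt_of_le hab h)⟩ ⟨hb.1, h⟩ hab
    · rcases le_total (1/2 : ℝ) a with h' | h'
      · exact anti2 ⟨h', ha.2⟩ ⟨le_trans h' hab.le, hb.2⟩ hab
      · rcases eq_or_lt_of_le h' with heq | ha2
        · exact anti2 ⟨heq.ge, ha.2⟩ ⟨h, hb.2⟩ hab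
        · rcases eq_or_lt_of_le h with heq | hb2
          · exact anti1 ⟨ha.1, ha2.le⟩ ⟨hb.1, heq.ge⟩ hab
          · have h1 := anti1 ⟨ha.1, ha2.le⟩ ⟨by norm_num, le_refl _⟩ ha2
            have h2 := anti2 ⟨le_refl _, by norm_num⟩ ⟨h, hb.2⟩ hb2
            linarith
end

section
/- Let f(z) = z·e^z and let p(y) = -y·cot(y) + i·y for y ∈ (0, π) parametrize the curve Im(z e^z) = 0 in the upper half-plane. Then f(p(y)) = -y·e^{-y cot y}/sin(y) is real, strictly decreasing in y on (0, π), tends to -1/e as y → 0+, and tends to -∞ as y → π⁻. -/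
open Filter

/-- Value of `z * exp z` along the curve `Im (z e^z) = 0`, `z = -y cot y + i y`. -/
noncomputable def lambertBoundaryValue (y : ℝ) : ℝ :=
  -y * Real.exp (-y * (Real.cos y / Real.sin y)) / Real.sin y

lemma lbv_hasDerivAt (y : ℝ) (hs : Real.sin y ≠ 0) :
    HasDerivAt lambertBoundaryValue
      (-(Real.exp (-y * (Real.cos y / Real.sin y)) / Real.sin y ^ 3) *
        (Real.sin y ^ 2 - 2 * y * Real.cos y * Real.sin y + y ^ 2)) y := by
  have hpyth := Real.sin_sq_add_cos_sq y
  have h1 : HasDerivAt (fun t => Real.cos t / Real.sin t)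
      ((-Real.sin y * Real.sin y - Real.cos y * Real.cos y) / Real.sin y ^ 2) y :=
    (Real.hasDerivAt_cos y).div (Real.hasDerivAt_sin y) hs
  have h2 : HasDerivAt (fun t : ℝ => -t) (-1) y := (hasDerivAt_id y).neg
  have h3 := (h2.mul h1).exp
  have h4 := h2.mul h3
  have h5 := h4.div (Real.hasDerivAt_sin y) hs
  refine h5.congr_deriv (Eq.symm ?_)
  simp only [Pi.mul_apply]
  field_simp
  ring_nf
  linear_combination (y^2) * hpyth

lemma lbv_eq (y : ℝ) :
    lambertBoundaryValue y = -(y / Real.sin y) * Real.exp (-(y / Real.sin y) * Real.cos y) := by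
  rw [lambertBoundaryValue, show -y * (Real.cos y / Real.sin y) = -(y / Real.sin y) * Real.cos y
    from by ring]
  ring

theorem lambert_boundary_curve :
    (∀ y ∈ Set.Ioo 0 Real.pi,
        (((-y * (Real.cos y / Real.sin y) : ℝ) : ℂ) + (y : ℂ) * Complex.I) *
            Complex.exp (((-y * (Real.cos y / Real.sin y) : ℝ) : ℂ) + (y : ℂ) * Complex.I) =
          ((lambertBoundaryValue y : ℝ) : ℂ)) ∧
    StrictAntiOn lambertBoundaryValue (Set.Ioo 0 Real.pi) ∧
    Tendsto lambertBoundaryValue (nhdsWithin 0 (Set.Ioi 0)) (nhds (-1 / Real.exp 1)) ∧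
    Tendsto lambertBoundaryValue (nhdsWithin Real.pi (Set.Iio Real.pi)) atBot := by
  refine ⟨?_, ?_, ?_, ?_⟩
  · -- the curve identity
    intro y hy
    have hs : Real.sin y ≠ 0 := ne_of_gt (Real.sin_pos_of_pos_of_lt_pi hy.1 hy.2)
    have hpyth := Real.sin_sq_add_cos_sq y
    set x : ℝ := -y * (Real.cos y / Real.sin y) with hx
    have h_re : x * Real.cos y - y * Real.sin y = -y / Real.sin y := by
      rw [hx]; field_simp; linear_combination (-y) * hpyth
    have h_im : x * Real.sin y + y * Real.cos y = 0 := by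
      rw [hx]; field_simp; ring
    have hreC : ((x:ℝ):ℂ) * ((Real.cos y :ℝ):ℂ) - ((y:ℝ):ℂ) * ((Real.sin y:ℝ):ℂ)
        = -((y:ℝ):ℂ) / ((Real.sin y:ℝ):ℂ) := by
      rw [← Complex.ofReal_mul, ← Complex.ofReal_mul, ← Complex.ofReal_sub, h_re,
        Complex.ofReal_div, Complex.ofReal_neg]
    have himC : ((x:ℝ):ℂ) * ((Real.sin y :ℝ):ℂ) + ((y:ℝ):ℂ) * ((Real.cos y:ℝ):ℂ) = 0 := by
      rw [← Complex.ofReal_mul, ← Complex.ofReal_mul, ← Complex.ofReal_add, h_im,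
        Complex.ofReal_zero]
    rw [Complex.exp_add, Complex.exp_mul_I, ← Complex.ofReal_cos, ← Complex.ofReal_sin,
      ← Complex.ofReal_exp, lambertBoundaryValue]
    simp only [Complex.ofReal_div, Complex.ofReal_mul, Complex.ofReal_neg]
    linear_combination ((Real.exp x : ℂ)) * hreC + ((Real.exp x : ℂ)) * Complex.I * himC +
      ((Real.exp x : ℂ) * (y:ℂ) * (Real.sin y : ℂ)) * Complex.I_sq
  · -- strictly decreasing
    apply strictAntiOn_of_deriv_neg (convex_Ioo 0 Real.pi)
    · intro y hy
      have hs : Real.sin y ≠ 0 := ne_of_gt (Real.sin_pos_of_pos_of_lt_pi hy.1 hy.2)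
      exact (lbv_hasDerivAt y hs).differentiableAt.continuousAt.continuousWithinAt
    · rw [interior_Ioo]
      intro y hy
      have hsp : 0 < Real.sin y := Real.sin_pos_of_pos_of_lt_pi hy.1 hy.2
      rw [(lbv_hasDerivAt y (ne_of_gt hsp)).deriv]
      have hE := Real.exp_pos (-y * (Real.cos y / Real.sin y))
      have hpyth := Real.sin_sq_add_cos_sq y
      have hQ : 0 < Real.sin y ^ 2 - 2 * y * Real.cos y * Real.sin y + y ^ 2 := by
        nlinarith [sq_nonneg (y - Real.cos y * Real.sin y), pow_pos hsp 4]
      have : 0 < Real.exp (-y * (Real.cos y / Real.sin y)) / Real.sin y ^ 3 :=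
        div_pos hE (by positivity)
      nlinarith
  · -- limit at 0⁺
    have hslope : Tendsto (fun y : ℝ => Real.sin y / y) (nhdsWithin 0 (Set.Ioi 0)) (nhds 1) := by
      have h := hasDerivAt_iff_tendsto_slope.mp (Real.hasDerivAt_sin 0)
      rw [Real.cos_zero] at h
      have h2 := h.mono_left (nhdsWithin_mono 0 (by intro z hz; exact ne_of_gt hz))
      refine h2.congr (fun z => ?_)
      simp [slope_def_field, div_eq_div_iff]
    have hyd : Tendsto (fun y : ℝ => y / Real.sin y) (nhdsWithin 0 (Set.Ioi 0)) (nhds 1) := by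
      have := hslope.inv₀ one_ne_zero
      simpa [inv_div] using this
    have hcos : Tendsto Real.cos (nhdsWithin 0 (Set.Ioi 0)) (nhds 1) := by
      simpa using (Real.continuous_cos.tendsto 0).mono_left nhdsWithin_le_nhds
    have harg : Tendsto (fun y : ℝ => -(y / Real.sin y) * Real.cos y)
        (nhdsWithin 0 (Set.Ioi 0)) (nhds (-1 * 1)) := hyd.neg.mul hcos
    have hexp := (Real.continuous_exp.tendsto (-1 * 1)).comp harg
    have hfull := hyd.neg.mul hexp
    simp only [Function.comp] at hfull
    have : (fun y : ℝ => -(y / Real.sin y) * Real.exp (-(y / Real.sin y) * Real.cos y))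
        = lambertBoundaryValue := by
      funext y; rw [lbv_eq]
    rw [this] at hfull
    convert hfull using 2
    rw [show (-1 : ℝ) * 1 = -1 by ring, Real.exp_neg]
    field_simp
  · -- limit at π⁻
    have hmem : Set.Ioo 0 Real.pi ∈ nhdsWithin Real.pi (Set.Iio Real.pi) :=
      Ioo_mem_nhdsLT_of_mem ⟨Real.pi_pos, le_refl _⟩
    have hsin0 : Tendsto Real.sin (nhdsWithin Real.pi (Set.Iio Real.pi))
        (nhdsWithin 0 (Set.Ioi 0)) := by
      rw [tendsto_nhdsWithin_iff]
      constructor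
      · simpa [Real.sin_pi] using
          (Real.continuous_sin.tendsto Real.pi).mono_left nhdsWithin_le_nhds
      · filter_upwards [hmem] with y hy
        exact Real.sin_pos_of_pos_of_lt_pi hy.1 hy.2
    have hinv : Tendsto (fun y : ℝ => (Real.sin y)⁻¹) (nhdsWithin Real.pi (Set.Iio Real.pi))
        atTop := tendsto_inv_nhdsGT_zero.comp hsin0
    have hid : Tendsto (fun y : ℝ => y) (nhdsWithin Real.pi (Set.Iio Real.pi))
        (nhds Real.pi) := tendsto_id.mono_left nhdsWithin_le_nhds
    have hratio : Tendsto (fun y : ℝ => y / Real.sin y) (nhdsWithin Real.pi (Set.Iio Real.pi))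
        atTop := by
      simp only [div_eq_mul_inv]
      exact (Filter.Tendsto.pos_mul_atTop Real.pi_pos hid hinv)
    have hncos : Tendsto (fun y : ℝ => -Real.cos y) (nhdsWithin Real.pi (Set.Iio Real.pi))
        (nhds 1) := by
      simpa [Real.cos_pi] using
        ((Real.continuous_cos.tendsto Real.pi).mono_left nhdsWithin_le_nhds).neg
    have harg : Tendsto (fun y : ℝ => -(y / Real.sin y) * Real.cos y)
        (nhdsWithin Real.pi (Set.Iio Real.pi)) atTop := by
      have h := hratio.atTop_mul_pos zero_lt_one hncos
      refine h.congr (fun y => by ring)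
    have hexp : Tendsto (fun y : ℝ => Real.exp (-(y / Real.sin y) * Real.cos y))
        (nhdsWithin Real.pi (Set.Iio Real.pi)) atTop := Real.tendsto_exp_atTop.comp harg
    have hprod := Filter.Tendsto.atTop_mul_atTop₀ hratio hexp
    have : Tendsto (fun y : ℝ => -(y / Real.sin y * Real.exp (-(y / Real.sin y) * Real.cos y)))
        (nhdsWithin Real.pi (Set.Iio Real.pi)) atBot := by
      exact tendsto_neg_atBot_iff.mpr hprod
    refine this.congr (fun y => ?_)
    rw [lbv_eq]; ring
end

section
/- Fix γ < 0 and consider g(y) = cos y + 2γ·y·sin y on [0, y*], where y* ∈ (π/2, π) is the unique solution of (2γ/(2γ-1))·y + tan y = 0 in (π/2, π). Then g(0) = 1, g is strictly decreasing on (0, y*), and g(y*) < -1; consequently there is a unique y₀ ∈ (0, y*) with g(y₀) = -1. -/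
theorem lambert_tsallis_boundary_gamma_neg
    (γ : ℝ) (hγ : γ < 0) (ystar : ℝ)
    (hystar : ystar ∈ Set.Ioo (Real.pi / 2) Real.pi)
    (heq : (2 * γ / (2 * γ - 1)) * ystar + Real.tan ystar = 0)
    (huniq : ∀ y ∈ Set.Ioo (Real.pi / 2) Real.pi,
        (2 * γ / (2 * γ - 1)) * y + Real.tan y = 0 → y = ystar) :
    (Real.cos 0 + 2 * γ * 0 * Real.sin 0 = 1) ∧
    StrictAntiOn (fun y : ℝ => Real.cos y + 2 * γ * y * Real.sin y) (Set.Ioo 0 ystar) ∧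
    Real.cos ystar + 2 * γ * ystar * Real.sin ystar < -1 ∧
    (∃! y₀ : ℝ, y₀ ∈ Set.Ioo 0 ystar ∧
        Real.cos y₀ + 2 * γ * y₀ * Real.sin y₀ = -1) := by
  obtain ⟨hy1, hy2⟩ := hystar
  have hpi : (0:ℝ) < Real.pi := Real.pi_pos
  have h2γ : 2 * γ - 1 < 0 := by linarith
  have h2γne : 2 * γ - 1 ≠ 0 := ne_of_lt h2γ
  set c : ℝ := 2 * γ / (2 * γ - 1) with hc
  have hcpos : 0 < c := div_pos_of_neg_of_neg (by linarith) h2γ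
  have hcc : c * (2 * γ - 1) = 2 * γ := div_mul_cancel₀ _ h2γne
  have h0ys : 0 < ystar := lt_trans (by positivity) hy1
  -- cos/sin facts at ystar
  have hCneg : Real.cos ystar < 0 :=
    Real.cos_neg_of_pi_div_two_lt_of_lt hy1 (by linarith)
  have hCne : Real.cos ystar ≠ 0 := ne_of_lt hCneg
  have hC1 : -1 < Real.cos ystar := by
    have := Real.cos_lt_cos_of_nonneg_of_le_pi (le_of_lt h0ys) le_rfl
      (show ystar < Real.pi from hy2)
    simpa [Real.cos_pi] using this
  have hSpos : 0 < Real.sin ystar := Real.sin_pos_of_pos_of_lt_pi h0ys hy2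
  -- the function c*y + tan y is strictly increasing on (π/2, π)
  have hmono : StrictMonoOn (fun y => c * y + Real.tan y)
      (Set.Ioo (Real.pi / 2) Real.pi) := by
    have hcosne : ∀ x ∈ Set.Ioo (Real.pi / 2) Real.pi, Real.cos x ≠ 0 := by
      intro x hx
      exact ne_of_lt (Real.cos_neg_of_pi_div_two_lt_of_lt hx.1 (by linarith [hx.2]))
    apply strictMonoOn_of_deriv_pos (convex_Ioo _ _)
    · exact (continuousOn_const.mul continuousOn_id).add
        (Real.continuousOn_tan.mono (fun x hx => hcosne x hx))
    · intro x hx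
      rw [interior_Ioo] at hx
      have hd : HasDerivAt (fun y => c * y + Real.tan y)
          (c + 1 / Real.cos x ^ 2) x := by
        have h1 : HasDerivAt (fun y : ℝ => c * y) c x := by
          simpa using (hasDerivAt_id x).const_mul c
        exact h1.add (Real.hasDerivAt_tan (hcosne x hx))
      rw [hd.deriv]
      have hc2 : 0 < Real.cos x ^ 2 :=
        lt_of_le_of_ne (sq_nonneg _) (Ne.symm (pow_ne_zero 2 (hcosne x hx)))
      have : 0 < 1 / Real.cos x ^ 2 := by positivity
      linarith
  -- derivative of g
  have hd : ∀ x : ℝ, HasDerivAt (fun y => Real.cos y + 2 * γ * y * Real.sin y)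
      ((2 * γ - 1) * Real.sin x + 2 * γ * x * Real.cos x) x := by
    intro x
    have h1 : HasDerivAt (fun y : ℝ => 2 * γ * y) (2 * γ) x := by
      simpa using (hasDerivAt_id x).const_mul (2 * γ)
    have h3 := (Real.hasDerivAt_cos x).add (h1.mul (Real.hasDerivAt_sin x))
    exact h3.congr_deriv (by ring)
  -- derivative negative on (0, ystar)
  have key : ∀ x ∈ Set.Ioo (0:ℝ) ystar,
      (2 * γ - 1) * Real.sin x + 2 * γ * x * Real.cos x < 0 := by
    intro x hx
    obtain ⟨hx0, hxs⟩ := hx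
    have hxpi : x < Real.pi := lt_trans hxs hy2
    have hsin : 0 < Real.sin x := Real.sin_pos_of_pos_of_lt_pi hx0 hxpi
    rcases le_or_gt x (Real.pi / 2) with hle | hgt
    · have hcos : 0 ≤ Real.cos x :=
        Real.cos_nonneg_of_mem_Icc ⟨by linarith, hle⟩
      have t1 : (2 * γ - 1) * Real.sin x < 0 := mul_neg_of_neg_of_pos h2γ hsin
      have t2 : 2 * γ * x * Real.cos x ≤ 0 :=
        mul_nonpos_of_nonpos_of_nonneg
          (le_of_lt (mul_neg_of_neg_of_pos (by linarith) hx0)) hcos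
      linarith
    · have hcos : Real.cos x < 0 :=
        Real.cos_neg_of_pi_div_two_lt_of_lt hgt (by linarith)
      have hcosne : Real.cos x ≠ 0 := ne_of_lt hcos
      have hh : c * x + Real.tan x < 0 := by
        have := hmono ⟨hgt, hxpi⟩ ⟨hy1, hy2⟩ hxs
        simpa [heq] using this
      have hsintan : Real.sin x = Real.tan x * Real.cos x := by
        rw [Real.tan_eq_sin_div_cos]
        field_simp
      have hfact : (2 * γ - 1) * Real.sin x + 2 * γ * x * Real.cos x
          = ((2 * γ - 1) * Real.cos x) * (Real.tan x + c * x) := by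
        rw [hsintan]
        linear_combination (-(x * Real.cos x)) * hcc
      rw [hfact]
      exact mul_neg_of_pos_of_neg (mul_pos_of_neg_of_neg h2γ hcos) (by linarith)
  -- continuity of g
  have hcont : Continuous (fun y : ℝ => Real.cos y + 2 * γ * y * Real.sin y) :=
    Real.continuous_cos.add ((continuous_const.mul continuous_id).mul Real.continuous_sin)
  -- strict antitonicity on Icc (hence on Ioo)
  have hanti : StrictAntiOn (fun y : ℝ => Real.cos y + 2 * γ * y * Real.sin y)
      (Set.Icc 0 ystar) := by
    apply strictAntiOn_of_deriv_neg (convex_Icc _ _) hcont.continuousOn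
    intro x hx
    rw [interior_Icc] at hx
    rw [(hd x).deriv]
    exact key x hx
  have hantiIoo : StrictAntiOn (fun y : ℝ => Real.cos y + 2 * γ * y * Real.sin y)
      (Set.Ioo 0 ystar) :=
    hanti.mono (Set.Ioo_subset_Icc_self)
  -- g ystar < -1
  have heq' : c * ystar * Real.cos ystar + Real.sin ystar = 0 := by
    rw [Real.tan_eq_sin_div_cos] at heq
    field_simp at heq
    linarith [heq]
  have key2 : 2 * γ * ystar * Real.cos ystar = -(2 * γ - 1) * Real.sin ystar := by
    linear_combination (2 * γ - 1) * heq' - (ystar * Real.cos ystar) * hcc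
  have hpyth : Real.sin ystar ^ 2 + Real.cos ystar ^ 2 = 1 := Real.sin_sq_add_cos_sq ystar
  have hgystar : Real.cos ystar + 2 * γ * ystar * Real.sin ystar < -1 := by
    nlinarith [mul_pos hSpos hSpos, key2, hpyth, hC1, hCneg,
      mul_pos (neg_pos.mpr hγ) (mul_pos hSpos hSpos)]
  refine ⟨by simp, hantiIoo, hgystar, ?_⟩
  -- existence via IVT
  have hg0 : (fun y : ℝ => Real.cos y + 2 * γ * y * Real.sin y) 0 = 1 := by simp
  have hmem : (-1:ℝ) ∈ Set.Ioo
      ((fun y : ℝ => Real.cos y + 2 * γ * y * Real.sin y) ystar)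
      ((fun y : ℝ => Real.cos y + 2 * γ * y * Real.sin y) 0) := by
    rw [hg0]; exact ⟨hgystar, by norm_num⟩
  obtain ⟨y₀, hy₀, hgy₀⟩ :=
    intermediate_value_Ioo' (le_of_lt h0ys) hcont.continuousOn hmem
  refine ⟨y₀, ⟨hy₀, hgy₀⟩, ?_⟩
  intro z ⟨hz, hgz⟩
  exact hantiIoo.injOn hz hy₀ (hgz.trans hgy₀.symm)
end
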